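/- In a 2-dimensional C-WMMG, if players p_i and p_j satisfy p_i^1 ≤ p_j^1 and p_i^2 ≤ p_j^2, then hp_i ≤ hp_j and dp_i ≤ dp_j. In particular, if p_i^1 = p_j^1 and p_i^2 = p_j^2, then hp_i = hp_j and dp_i = dp_j. -/

import Mathlib

/-- Competitive power of a coalition in a 2-dimensional C-WMMG with weights `w1, w2`. -/
def q {P : Type*} [DecidableEq P] (w1 w2 : P → ℕ) (C : Finset P) : ℕ :=
  C.sup w1 + C.sup w2

/-- A coalition is winning iff its power exceeds that of its complement. -/
def Winning {P : Type*} [Fintype P] [DecidableEq P] (w1 w2 : P → ℕ) (C : Finset P) : Prop :=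
  q w1 w2 Cᶜ < q w1 w2 C

/-- A minimal winning coalition: winning, and every proper subset is losing. -/
def MWC {P : Type*} [Fintype P] [DecidableEq P] (w1 w2 : P → ℕ) (C : Finset P) : Prop :=
  Winning w1 w2 C ∧ ∀ D ⊂ C, ¬ Winning w1 w2 D

/-- `Aset w C` is the set of members of `C` whose `w`-weight attains the maximum over `C`. -/
def Aset {P : Type*} [DecidableEq P] (w : P → ℕ) (C : Finset P) : Finset P :=
  C.filter (fun j => w j = C.sup w)

open scoped Classical in
/-- The finset of minimal winning coalitions containing player `j`. -/
noncomputable def mwcsOf {P : Type*} [Fintype P] [DecidableEq P] (w1 w2 : P → ℕ) (j : P) :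
    Finset (Finset P) :=
  Finset.univ.filter (fun C => MWC w1 w2 C ∧ j ∈ C)

/-- The Holler-Packel index `hp_j = |MWC_j|`. -/
noncomputable def hp {P : Type*} [Fintype P] [DecidableEq P] (w1 w2 : P → ℕ) (j : P) : ℕ :=
  (mwcsOf w1 w2 j).card

/-- The Deegan-Packel index `dp_j = ∑_{C ∈ MWC_j} 1/|C|`. -/
noncomputable def dp {P : Type*} [Fintype P] [DecidableEq P] (w1 w2 : P → ℕ) (j : P) : ℚ :=
  ∑ C ∈ mwcsOf w1 w2 j, (1 : ℚ) / C.card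

/- ------------------ auxiliary arithmetic lemmas ------------------ -/

private lemma mxAbsorb {a b c : ℕ} (h : c ≤ a) : max a (max c b) = max a b := by omega

private lemma mxAbsorb3 {a s s2 r : ℕ} (h1 : s ≤ a) (h2 : s2 ≤ a) :
    max a (max (max s s2) r) = max a r := by omega

private lemma helperD {X Y U V ai bi : ℕ}
    (h2 : U + V < max ai X + max bi Y) (h5 : X + Y ≤ U + V) : X < ai ∨ Y < bi := by omega

private lemma helperA1 {U H ai bi bj aj Y : ℕ}
    (h : U + H < ai + max bi Y) (hU : aj ≤ U) (hH : bj ≤ H)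
    (h1 : ai ≤ aj) (h2 : bi ≤ bj) : H < Y := by omega

private lemma helperA3 {bj q0 t t2 rp : ℕ}
    (k1 : max bj (max t2 rp) < max q0 t) (k2 : max bj (max t rp) < max q0 t2) :
    t ≤ q0 ∧ t2 ≤ q0 ∧ bj < q0 ∧ rp < q0 := by omega

private lemma helperAfin {F bj t t2 rp ai q0 : ℕ}
    (h2 : F + max bj (max t2 rp) < ai + q0)
    (h3 : F + max bj (max t rp) < ai + q0)
    (h4 : ai + q0 ≤ F + max bj (max (max t t2) rp)) : False := by omega

private lemma helperB1 {U F ai aj bi bj X : ℕ}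
    (h : U + F < max ai X + bi) (hU : aj ≤ U) (hF : bj ≤ F)
    (h1 : ai ≤ aj) (h2 : bi ≤ bj) : U < X := by omega

private lemma helperB3 {aj p s s2 r : ℕ}
    (k1 : max aj (max s2 r) < max p s) (k2 : max aj (max s r) < max p s2) :
    s ≤ p ∧ s2 ≤ p ∧ aj < p ∧ r < p := by omega

private lemma helperBfin {aj s s2 r F p bi : ℕ}
    (h2 : max aj (max s2 r) + F < p + bi)
    (h3 : max aj (max s r) + F < p + bi)
    (h4 : p + bi ≤ max aj (max (max s s2) r) + F) : False := by omega

private lemma helperC1 {U H ai aj bi bj t : ℕ}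
    (h : U + H < ai + max bi t) (hU : aj ≤ U) (hH : bj ≤ H)
    (h1 : ai ≤ aj) (h2 : bi ≤ bj) : bj < t := by omega

private lemma helperC2 {K ai aj bi bj s2 t rp : ℕ}
    (h : K + max bj (max t rp) < max ai s2 + bi) (hK : aj ≤ K) (ht : bj < t)
    (h1 : ai ≤ aj) (h2 : bi ≤ bj) : aj < s2 := by omega

private lemma helperC3 {aj bj s2 t X Y : ℕ}
    (h1 : X + Y < aj + bj) (hX : s2 ≤ X) (hY : t ≤ Y)
    (h2 : aj < s2) (h3 : bj < t) : False := by omega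

private theorem arith (ai aj bi bj p q0 s t s2 t2 r rp : ℕ)
    (hij1 : ai ≤ aj) (hij2 : bi ≤ bj)
    (h1 : max ai (max (max s s2) r) + max bi (max (max t t2) rp) < max aj p + max bj q0)
    (h2 : max aj (max s2 r) + max bj (max t2 rp) < max ai (max p s) + max bi (max q0 t))
    (h3 : max aj (max s r) + max bj (max t rp) < max ai (max p s2) + max bi (max q0 t2))
    (h4 : max ai p + max bi q0 ≤ max aj (max (max s s2) r) + max bj (max (max t t2) rp))
    (h5 : max p s + max q0 t ≤ max ai (max aj (max s2 r)) + max bi (max bj (max t2 rp)))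
    (h6 : max p s2 + max q0 t2 ≤ max ai (max aj (max s r)) + max bi (max bj (max t rp))) :
    False := by
  rw [max_eq_right (hij1.trans (le_max_left aj _)),
      max_eq_right (hij2.trans (le_max_left bj _))] at h5
  rw [max_eq_right (hij1.trans (le_max_left aj _)),
      max_eq_right (hij2.trans (le_max_left bj _))] at h6
  have d1 := helperD h2 h5
  have d2 := helperD h3 h6
  rcases d1 with hA1 | hB1 <;> rcases d2 with hA2 | hB2
  · -- case (a) : max p s < ai, max p s2 < ai
    have hp' : p < ai := (le_max_left p s).trans_lt hA1
    have hs : s < ai := (le_max_right p s).trans_lt hA1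
    have hs2 : s2 < ai := (le_max_right p s2).trans_lt hA2
    rw [max_eq_left hA1.le] at h2
    rw [max_eq_left hA2.le] at h3
    have k1 : max bj (max t2 rp) < max q0 t :=
      helperA1 h2 (le_max_left aj _) (le_max_left bj _) hij1 hij2
    have k2 : max bj (max t rp) < max q0 t2 :=
      helperA1 h3 (le_max_left aj _) (le_max_left bj _) hij1 hij2
    obtain ⟨ht, ht2, hbj, _⟩ := helperA3 k1 k2
    have hbi_q0 : bi ≤ q0 := hij2.trans hbj.le
    rw [max_eq_left ht, max_eq_right hbi_q0, mxAbsorb (hs2.le.trans hij1)] at h2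
    rw [max_eq_left ht2, max_eq_right hbi_q0, mxAbsorb (hs.le.trans hij1)] at h3
    rw [max_eq_left hp'.le, max_eq_right hbi_q0,
        mxAbsorb3 (hs.le.trans hij1) (hs2.le.trans hij1)] at h4
    exact helperAfin h2 h3 h4
  · -- case (c) : max p s < ai, max q0 t2 < bi
    have hp' : p < ai := (le_max_left p s).trans_lt hA1
    have hq0 : q0 < bi := (le_max_left q0 t2).trans_lt hB2
    have ht2 : t2 < bi := (le_max_right q0 t2).trans_lt hB2
    rw [max_eq_left hA1.le, mxAbsorb hq0.le] at h2
    have hbjt : bj < t :=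
      helperC1 h2 (le_max_left aj _) (le_max_left bj _) hij1 hij2
    rw [mxAbsorb hp'.le, max_eq_left (max_le hq0.le ht2.le)] at h3
    have hs2aj : aj < s2 := helperC2 h3 (le_max_left aj _) hbjt hij1 hij2
    rw [max_eq_left (hp'.le.trans hij1), max_eq_left (hq0.le.trans hij2)] at h1
    exact helperC3 h1
      ((le_max_right s s2).trans ((le_max_left _ r).trans (le_max_right ai _)))
      ((le_max_left t t2).trans ((le_max_left _ rp).trans (le_max_right bi _)))
      hs2aj hbjt
  · -- case (d) : max q0 t < bi, max p s2 < ai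
    have hp' : p < ai := (le_max_left p s2).trans_lt hA2
    have hs2 : s2 < ai := (le_max_right p s2).trans_lt hA2
    have hq0 : q0 < bi := (le_max_left q0 t).trans_lt hB1
    have ht : t < bi := (le_max_right q0 t).trans_lt hB1
    rw [max_eq_left hA2.le, mxAbsorb hq0.le] at h3
    have hbjt2 : bj < t2 :=
      helperC1 h3 (le_max_left aj _) (le_max_left bj _) hij1 hij2
    rw [mxAbsorb hp'.le, max_eq_left (max_le hq0.le ht.le)] at h2
    have hsaj : aj < s := helperC2 h2 (le_max_left aj _) hbjt2 hij1 hij2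
    rw [max_eq_left (hp'.le.trans hij1), max_eq_left (hq0.le.trans hij2)] at h1
    exact helperC3 h1
      ((le_max_left s s2).trans ((le_max_left _ r).trans (le_max_right ai _)))
      ((le_max_right t t2).trans ((le_max_left _ rp).trans (le_max_right bi _)))
      hsaj hbjt2
  · -- case (b) : max q0 t < bi, max q0 t2 < bi
    have hq0 : q0 < bi := (le_max_left q0 t).trans_lt hB1
    have ht : t < bi := (le_max_right q0 t).trans_lt hB1
    have ht2 : t2 < bi := (le_max_right q0 t2).trans_lt hB2
    rw [max_eq_left hB1.le, mxAbsorb (ht2.le.trans hij2)] at h2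
    rw [max_eq_left hB2.le, mxAbsorb (ht.le.trans hij2)] at h3
    have k1 : max aj (max s2 r) < max p s :=
      helperB1 h2 (le_max_left aj _) (le_max_left bj _) hij1 hij2
    have k2 : max aj (max s r) < max p s2 :=
      helperB1 h3 (le_max_left aj _) (le_max_left bj _) hij1 hij2
    obtain ⟨hs, hs2, haj, _⟩ := helperB3 k1 k2
    have hai_p : ai ≤ p := hij1.trans haj.le
    rw [max_eq_left hs, max_eq_right hai_p] at h2
    rw [max_eq_left hs2, max_eq_right hai_p] at h3
    rw [max_eq_right hai_p, max_eq_left hq0.le,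
        mxAbsorb3 (ht.le.trans hij2) (ht2.le.trans hij2)] at h4
    exact helperBfin h2 h3 h4

/- ------------------ game-theoretic lemmas ------------------ -/

section Game

variable {P : Type*} [Fintype P] [DecidableEq P] (w1 w2 : P → ℕ)

lemma q_mono {C D : Finset P} (h : C ⊆ D) : q w1 w2 C ≤ q w1 w2 D :=
  add_le_add (Finset.sup_mono h) (Finset.sup_mono h)

lemma winning_mono {C D : Finset P} (h : C ⊆ D) (hC : Winning w1 w2 C) :
    Winning w1 w2 D := by
  unfold Winning at hC ⊢
  exact lt_of_le_of_lt (q_mono w1 w2 (Finset.compl_subset_compl.mpr h))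
    (hC.trans_le (q_mono w1 w2 h))

lemma exists_mwc_subset {W : Finset P} (hW : Winning w1 w2 W) :
    ∃ D, D ⊆ W ∧ MWC w1 w2 D := by
  induction W using Finset.strongInduction with
  | _ W ih =>
    by_cases h : ∀ D ⊂ W, ¬ Winning w1 w2 D
    · exact ⟨W, Finset.Subset.refl W, hW, h⟩
    · push_neg at h
      obtain ⟨D, hDW, hDwin⟩ := h
      obtain ⟨E, hEW, hE⟩ := ih D hDW hDwin
      exact ⟨E, hEW.trans hDW.subset, hE⟩

lemma swap_winning {C : Finset P} {i j : P} (hC : Winning w1 w2 C)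
    (hi : i ∈ C) (hj : j ∉ C) (hw1 : w1 i ≤ w1 j) (hw2 : w2 i ≤ w2 j) :
    Winning w1 w2 (insert j (C.erase i)) := by
  have hij : i ≠ j := fun h => hj (h ▸ hi)
  have eid : (insert j (C.erase i))ᶜ = insert i (Cᶜ.erase j) := by
    ext x
    simp only [Finset.mem_compl, Finset.mem_insert, Finset.mem_erase]
    by_cases hxi : x = i <;> by_cases hxj : x = j <;> simp_all
  have key1 : q w1 w2 C ≤ q w1 w2 (insert j (C.erase i)) := by
    conv_lhs => rw [← Finset.insert_erase hi]
    unfold q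
    rw [Finset.sup_insert, Finset.sup_insert, Finset.sup_insert, Finset.sup_insert]
    exact add_le_add (sup_le_sup_right hw1 _) (sup_le_sup_right hw2 _)
  have hjc : j ∈ Cᶜ := Finset.mem_compl.mpr hj
  have key2 : q w1 w2 (insert j (C.erase i))ᶜ ≤ q w1 w2 Cᶜ := by
    rw [eid]
    conv_rhs => rw [← Finset.insert_erase hjc]
    unfold q
    rw [Finset.sup_insert, Finset.sup_insert, Finset.sup_insert, Finset.sup_insert]
    exact add_le_add (sup_le_sup_right hw1 _) (sup_le_sup_right hw2 _)
  unfold Winning at hC ⊢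
  exact key2.trans_lt (hC.trans_le key1)

lemma inter_losing {C1 C2 : Finset P} {i j : P} (hij : i ≠ j)
    (hw1 : w1 i ≤ w1 j) (hw2 : w2 i ≤ w2 j)
    (hC1 : MWC w1 w2 C1) (hC2 : MWC w1 w2 C2)
    (hi1 : i ∈ C1) (hi2 : i ∈ C2) (hj1 : j ∉ C1) (hj2 : j ∉ C2)
    (hne : C1 ≠ C2) : ¬ Winning w1 w2 (insert j ((C1 ∩ C2).erase i)) := by
  intro hW
  set K' := (C1 ∩ C2).erase i with hK'def
  set S1 := C1 \ C2 with hS1def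
  set S2 := C2 \ C1 with hS2def
  set R := ((C1 ∪ C2)ᶜ).erase j with hRdef
  have eA : C1 = insert i (K' ∪ S1) := by
    ext x
    simp only [hK'def, hS1def, hS2def, hRdef]
    rcases eq_or_ne x i with rfl | hxi
    · simp [hi1, hi2, hij]
    · rcases eq_or_ne x j with rfl | hxj
      · simp [hj1, hj2, hxi, Ne.symm hij]
      · simp [hxi, hxj]
        try tauto
  have eB : C2 = insert i (K' ∪ S2) := by
    ext x
    simp only [hK'def, hS1def, hS2def, hRdef]
    rcases eq_or_ne x i with rfl | hxi
    · simp [hi1, hi2, hij]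
    · rcases eq_or_ne x j with rfl | hxj
      · simp [hj1, hj2, hxi, Ne.symm hij]
      · simp [hxi, hxj]
        try tauto
  have eC : C1ᶜ = insert j (S2 ∪ R) := by
    ext x
    simp only [hK'def, hS1def, hS2def, hRdef]
    rcases eq_or_ne x i with rfl | hxi
    · simp [hi1, hi2, hij]
    · rcases eq_or_ne x j with rfl | hxj
      · simp [hj1, hj2, hxi, Ne.symm hij]
      · simp [hxi, hxj]
        try tauto
  have eD : C2ᶜ = insert j (S1 ∪ R) := by
    ext x
    simp only [hK'def, hS1def, hS2def, hRdef]
    rcases eq_or_ne x i with rfl | hxi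
    · simp [hi1, hi2, hij]
    · rcases eq_or_ne x j with rfl | hxj
      · simp [hj1, hj2, hxi, Ne.symm hij]
      · simp [hxi, hxj]
        try tauto
  have eE : (insert j K')ᶜ = insert i ((S1 ∪ S2) ∪ R) := by
    ext x
    simp only [hK'def, hS1def, hS2def, hRdef]
    rcases eq_or_ne x i with rfl | hxi
    · simp [hi1, hi2, hij]
    · rcases eq_or_ne x j with rfl | hxj
      · simp [hj1, hj2, hxi, Ne.symm hij]
      · simp [hxi, hxj]
        try tauto
  have eF : C1 ∩ C2 = insert i K' := by
    ext x
    simp only [hK'def, hS1def, hS2def, hRdef]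
    rcases eq_or_ne x i with rfl | hxi
    · simp [hi1, hi2, hij]
    · rcases eq_or_ne x j with rfl | hxj
      · simp [hj1, hj2, hxi, Ne.symm hij]
      · simp [hxi, hxj]
        try tauto
  have eG : (C1 ∩ C2)ᶜ = insert j ((S1 ∪ S2) ∪ R) := by
    ext x
    simp only [hK'def, hS1def, hS2def, hRdef]
    rcases eq_or_ne x i with rfl | hxi
    · simp [hi1, hi2, hij]
    · rcases eq_or_ne x j with rfl | hxj
      · simp [hj1, hj2, hxi, Ne.symm hij]
      · simp [hxi, hxj]
        try tauto
  have eH : C1.erase i = K' ∪ S1 := by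
    ext x
    simp only [hK'def, hS1def, hS2def, hRdef]
    rcases eq_or_ne x i with rfl | hxi
    · simp [hi1, hi2, hij]
    · rcases eq_or_ne x j with rfl | hxj
      · simp [hj1, hj2, hxi, Ne.symm hij]
      · simp [hxi, hxj]
        try tauto
  have eI : C2.erase i = K' ∪ S2 := by
    ext x
    simp only [hK'def, hS1def, hS2def, hRdef]
    rcases eq_or_ne x i with rfl | hxi
    · simp [hi1, hi2, hij]
    · rcases eq_or_ne x j with rfl | hxj
      · simp [hj1, hj2, hxi, Ne.symm hij]
      · simp [hxi, hxj]
        try tauto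
  -- the six inequalities
  have hKss1 : C1 ∩ C2 ⊂ C1 := by
    refine ⟨Finset.inter_subset_left, fun hsub => ?_⟩
    have h12 : C1 ⊆ C2 := fun x hx => (Finset.mem_inter.mp (hsub hx)).2
    exact hC2.2 C1 ⟨h12, fun h21 => hne (Finset.Subset.antisymm h12 h21)⟩ hC1.1
  have F1 : q w1 w2 (insert i ((S1 ∪ S2) ∪ R)) < q w1 w2 (insert j K') := by
    have := hW; unfold Winning at this; rwa [eE] at this
  have F2 : q w1 w2 (insert j (S2 ∪ R)) < q w1 w2 (insert i (K' ∪ S1)) := by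
    have := hC1.1; unfold Winning at this; rwa [eC, eA] at this
  have F3 : q w1 w2 (insert j (S1 ∪ R)) < q w1 w2 (insert i (K' ∪ S2)) := by
    have := hC2.1; unfold Winning at this; rwa [eD, eB] at this
  have F4 : q w1 w2 (insert i K') ≤ q w1 w2 (insert j ((S1 ∪ S2) ∪ R)) := by
    have h4 := hC1.2 (C1 ∩ C2) hKss1
    unfold Winning at h4
    rw [eG, eF] at h4
    exact le_of_not_gt h4
  have F5 : q w1 w2 (K' ∪ S1) ≤ q w1 w2 (insert i (insert j (S2 ∪ R))) := by
    have h5 := hC1.2 (C1.erase i) (Finset.erase_ssubset hi1)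
    unfold Winning at h5
    rw [Finset.compl_erase, eC, eH] at h5
    exact le_of_not_gt h5
  have F6 : q w1 w2 (K' ∪ S2) ≤ q w1 w2 (insert i (insert j (S1 ∪ R))) := by
    have h6 := hC2.2 (C2.erase i) (Finset.erase_ssubset hi2)
    unfold Winning at h6
    rw [Finset.compl_erase, eD, eI] at h6
    exact le_of_not_gt h6
  simp only [q, Finset.sup_insert, Finset.sup_union] at F1 F2 F3 F4 F5 F6
  exact arith (w1 i) (w1 j) (w2 i) (w2 j) (K'.sup w1) (K'.sup w2) (S1.sup w1) (S1.sup w2)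
    (S2.sup w1) (S2.sup w2) (R.sup w1) (R.sup w2) hw1 hw2 F1 F2 F3 F4 F5 F6

lemma mem_mwcsOf {C : Finset P} {j : P} :
    C ∈ mwcsOf w1 w2 j ↔ MWC w1 w2 C ∧ j ∈ C := by
  classical
  simp [mwcsOf]

lemma hp_dp_le (i j : P) (hw1 : w1 i ≤ w1 j) (hw2 : w2 i ≤ w2 j) :
    hp w1 w2 i ≤ hp w1 w2 j ∧ dp w1 w2 i ≤ dp w1 w2 j := by
  rcases eq_or_ne i j with rfl | hij
  · exact ⟨le_refl _, le_refl _⟩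
  have key : ∀ C : Finset P, ∃ D : Finset P, C ∈ mwcsOf w1 w2 i →
      (D ∈ mwcsOf w1 w2 j ∧
       D ⊆ (if j ∈ C then C else insert j (C.erase i)) ∧
       D.card ≤ C.card ∧ (j ∈ C → D = C)) := by
    intro C
    by_cases hC : C ∈ mwcsOf w1 w2 i
    · obtain ⟨hCmwc, hiC⟩ := (mem_mwcsOf w1 w2).mp hC
      by_cases hjC : j ∈ C
      · exact ⟨C, fun _ => ⟨(mem_mwcsOf w1 w2).mpr ⟨hCmwc, hjC⟩,
          by simp [hjC], le_refl _, fun _ => rfl⟩⟩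
      · have hwin : Winning w1 w2 (insert j (C.erase i)) :=
          swap_winning w1 w2 hCmwc.1 hiC hjC hw1 hw2
        obtain ⟨D, hDsub, hDmwc⟩ := exists_mwc_subset w1 w2 hwin
        have hjD : j ∈ D := by
          by_contra hjD
          have hDC : D ⊆ C.erase i := by
            intro x hx
            rcases Finset.mem_insert.mp (hDsub hx) with rfl | hx'
            · exact absurd hx hjD
            · exact hx'
          exact hCmwc.2 D (hDC.trans_ssubset (Finset.erase_ssubset hiC)) hDmwc.1
        have hcard : D.card ≤ C.card := by
          have h1 : D.card ≤ (insert j (C.erase i)).card := Finset.card_le_card hDsub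
          have h2 : (insert j (C.erase i)).card = (C.erase i).card + 1 :=
            Finset.card_insert_of_notMem (fun h => hjC (Finset.mem_of_mem_erase h))
          have h3 : (C.erase i).card = C.card - 1 := Finset.card_erase_of_mem hiC
          have h4 : 1 ≤ C.card := Finset.card_pos.mpr ⟨i, hiC⟩
          omega
        exact ⟨D, fun _ => ⟨(mem_mwcsOf w1 w2).mpr ⟨hDmwc, hjD⟩,
          by simp only [hjC, if_false]; exact hDsub, hcard, fun h => absurd h hjC⟩⟩
    · exact ⟨∅, fun h => absurd h hC⟩
  choose Φ hΦ using key
  have hmaps : ∀ C ∈ mwcsOf w1 w2 i, Φ C ∈ mwcsOf w1 w2 j := fun C hC => (hΦ C hC).1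
  have hinj : Set.InjOn Φ (mwcsOf w1 w2 i) := by
    intro C1 hC1 C2 hC2 heq
    simp only [Finset.coe_mem, Finset.mem_coe] at hC1 hC2
    obtain ⟨hM1, hi1⟩ := (mem_mwcsOf w1 w2).mp hC1
    obtain ⟨hM2, hi2⟩ := (mem_mwcsOf w1 w2).mp hC2
    obtain ⟨hmem1, hsub1, _, heqC1⟩ := hΦ C1 hC1
    obtain ⟨hmem2, hsub2, _, heqC2⟩ := hΦ C2 hC2
    obtain ⟨hMD, hjD⟩ := (mem_mwcsOf w1 w2).mp hmem1
    by_cases hj1 : j ∈ C1 <;> by_cases hj2 : j ∈ C2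
    · rw [← heqC1 hj1, ← heqC2 hj2, heq]
    · exfalso
      rw [heqC1 hj1] at heq
      rw [if_neg hj2] at hsub2
      have : i ∈ insert j (C2.erase i) := hsub2 (heq ▸ hi1)
      rcases Finset.mem_insert.mp this with h | h
      · exact hij h
      · exact (Finset.notMem_erase i C2) h
    · exfalso
      rw [heqC2 hj2] at heq
      rw [if_neg hj1] at hsub1
      have : i ∈ insert j (C1.erase i) := hsub1 (heq.symm ▸ hi2)
      rcases Finset.mem_insert.mp this with h | h
      · exact hij h
      · exact (Finset.notMem_erase i C1) h
    · by_contra hne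
      rw [if_neg hj1] at hsub1
      rw [if_neg hj2] at hsub2
      have hsubI : Φ C1 ⊆ insert j ((C1 ∩ C2).erase i) := by
        intro x hx
        have hx1 := hsub1 hx
        have hx2 := hsub2 (heq ▸ hx)
        simp only [Finset.mem_insert, Finset.mem_erase, Finset.mem_inter] at hx1 hx2 ⊢
        try tauto
      exact inter_losing w1 w2 hij hw1 hw2 hM1 hM2 hi1 hi2 hj1 hj2 hne
        (winning_mono w1 w2 hsubI hMD.1)
  constructor
  · exact Finset.card_le_card_of_injOn Φ hmaps hinj
  · unfold dp
    have step1 : ∑ C ∈ mwcsOf w1 w2 i, (1 : ℚ) / C.card ≤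
        ∑ C ∈ mwcsOf w1 w2 i, (1 : ℚ) / (Φ C).card := by
      apply Finset.sum_le_sum
      intro C hC
      obtain ⟨hmem, _, hcard, _⟩ := hΦ C hC
      obtain ⟨hMD, hjD⟩ := (mem_mwcsOf w1 w2).mp hmem
      have hpos : 0 < ((Φ C).card : ℚ) := by
        have := Finset.card_pos.mpr ⟨j, hjD⟩
        exact_mod_cast this
      apply one_div_le_one_div_of_le hpos
      exact_mod_cast hcard
    have step2 : ∑ C ∈ mwcsOf w1 w2 i, (1 : ℚ) / (Φ C).card =
        ∑ D ∈ (mwcsOf w1 w2 i).image Φ, (1 : ℚ) / D.card := by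
      rw [Finset.sum_image (fun x hx y hy h => hinj hx hy h)]
    have step3 : ∑ D ∈ (mwcsOf w1 w2 i).image Φ, (1 : ℚ) / D.card ≤
        ∑ D ∈ mwcsOf w1 w2 j, (1 : ℚ) / D.card := by
      apply Finset.sum_le_sum_of_subset_of_nonneg
      · intro D hD
        obtain ⟨C, hC, rfl⟩ := Finset.mem_image.mp hD
        exact hmaps C hC
      · intro D _ _
        positivity
    calc ∑ C ∈ mwcsOf w1 w2 i, (1 : ℚ) / C.card
        ≤ ∑ C ∈ mwcsOf w1 w2 i, (1 : ℚ) / (Φ C).card := step1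
      _ = ∑ D ∈ (mwcsOf w1 w2 i).image Φ, (1 : ℚ) / D.card := step2
      _ ≤ ∑ D ∈ mwcsOf w1 w2 j, (1 : ℚ) / D.card := step3

end Game

/-- Local monotonicity of the Holler-Packel and Deegan-Packel indices in 2-dim C-WMMGs:
if `p_i^1 ≤ p_j^1` and `p_i^2 ≤ p_j^2` then `hp_i ≤ hp_j` and `dp_i ≤ dp_j`; in
particular equal weight vectors give equal indices. -/
theorem hp_dp_local_monotone {P : Type*} [Fintype P] [DecidableEq P] (w1 w2 : P → ℕ) :
    (∀ i j : P, w1 i ≤ w1 j → w2 i ≤ w2 j →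
      hp w1 w2 i ≤ hp w1 w2 j ∧ dp w1 w2 i ≤ dp w1 w2 j) ∧
    (∀ i j : P, w1 i = w1 j → w2 i = w2 j →
      hp w1 w2 i = hp w1 w2 j ∧ dp w1 w2 i = dp w1 w2 j) := by
  constructor
  · exact fun i j h1 h2 => hp_dp_le w1 w2 i j h1 h2
  · intro i j h1 h2
    have A := hp_dp_le w1 w2 i j h1.le h2.le
    have B := hp_dp_le w1 w2 j i h1.ge h2.ge
    exact ⟨le_antisymm A.1 B.1, le_antisymm A.2 B.2⟩
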